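/- Let k be a positive integer and M a subset of F_2^n containing the zero vector and a basis of F_2^n. If 2k < |M| < 2^{n/k} · ((k-1)!)^{1/k}, then there exists a subset K of M with |K| = k+1 such that no sum of two or more distinct vectors of K lies in M. -/

import Mathlib

open Finset

/-- Counting lemma: `(k-1)! * ∑_{j=0}^{k} C(m-1, j) ≤ m^k` for `m ≥ 2k+1`. -/
lemma sum_choose_le (k : ℕ) (hk : 1 ≤ k) :
    ∀ m : ℕ, 2 * k + 1 ≤ m →
      (k - 1).factorial * (∑ j ∈ Finset.range (k + 1), Nat.choose (m - 1) j) ≤ m ^ k := by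
  induction k, hk using Nat.le_induction with
  | base =>
    intro m hm
    have h1 : 1 ≤ m - 1 := by omega
    simp [Finset.sum_range_succ, Nat.choose_one_right]
    omega
  | succ k hk ih =>
    intro m hm
    have ihm := ih m (by omega)
    have hsplit : (∑ j ∈ Finset.range (k + 2), Nat.choose (m - 1) j)
        = (∑ j ∈ Finset.range (k + 1), Nat.choose (m - 1) j) + Nat.choose (m - 1) (k + 1) :=
      Finset.sum_range_succ _ _
    have hfact : (k + 1 - 1).factorial = k * (k - 1).factorial := by
      obtain ⟨k', rfl⟩ : ∃ k', k = k' + 1 := ⟨k - 1, by omega⟩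
      simp [Nat.factorial_succ]
    -- multiply everything by (k+1)
    refine Nat.le_of_mul_le_mul_left (c := k + 1) ?_ (by omega)
    rw [hsplit, hfact]
    have hdesc : (k + 1) * ((k + 1 - 1).factorial * Nat.choose (m - 1) (k + 1))
        ≥ 0 := Nat.zero_le _
    have hdf : (k + 1) * (k * (k - 1).factorial * Nat.choose (m - 1) (k + 1)) * 1 ≥ 0 :=
      Nat.zero_le _
    -- (k+1)! * C(m-1, k+1) = descFactorial (m-1) (k+1) ≤ (m-k-1) * m^k
    have h2 : (k + 1).factorial * Nat.choose (m - 1) (k + 1) ≤ (m - 1 - k) * m ^ k := by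
      rw [← Nat.descFactorial_eq_factorial_mul_choose]
      rw [Nat.descFactorial_succ]
      exact Nat.mul_le_mul_left _ ((Nat.descFactorial_le_pow _ _).trans
        (Nat.pow_le_pow_left (by omega) _))
    have h2' : (k + 1) * (k * (k - 1).factorial) * Nat.choose (m - 1) (k + 1)
        ≤ (m - 1 - k) * m ^ k := by
      calc (k + 1) * (k * (k - 1).factorial) * Nat.choose (m - 1) (k + 1)
          ≤ (k + 1).factorial * Nat.choose (m - 1) (k + 1) := by
            apply Nat.mul_le_mul_right
            have : (k + 1).factorial = (k + 1) * k.factorial := Nat.factorial_succ k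
            rw [this]
            apply Nat.mul_le_mul_left
            obtain ⟨k', rfl⟩ : ∃ k', k = k' + 1 := ⟨k - 1, by omega⟩
            simp [Nat.factorial_succ]
        _ ≤ (m - 1 - k) * m ^ k := h2
    have h3 : (k + 1) * (k * (k - 1).factorial *
        (∑ j ∈ Finset.range (k + 1), Nat.choose (m - 1) j)) ≤ (k + 1) * (k * m ^ k) := by
      apply Nat.mul_le_mul_left
      calc k * (k - 1).factorial * (∑ j ∈ Finset.range (k + 1), Nat.choose (m - 1) j)
          = k * ((k - 1).factorial * (∑ j ∈ Finset.range (k + 1), Nat.choose (m - 1) j)) := by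
            ring
        _ ≤ k * m ^ k := Nat.mul_le_mul_left _ ihm
    calc (k + 1) * (k * (k - 1).factorial *
          ((∑ j ∈ Finset.range (k + 1), Nat.choose (m - 1) j) + Nat.choose (m - 1) (k + 1)))
        = (k + 1) * (k * (k - 1).factorial *
            (∑ j ∈ Finset.range (k + 1), Nat.choose (m - 1) j))
          + (k + 1) * (k * (k - 1).factorial) * Nat.choose (m - 1) (k + 1) := by ring
      _ ≤ (k + 1) * (k * m ^ k) + (m - 1 - k) * m ^ k := Nat.add_le_add h3 h2'
      _ = ((k + 1) * k + (m - 1 - k)) * m ^ k := by ring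
      _ ≤ ((k + 1) * m) * m ^ k := by
          apply Nat.mul_le_mul_right
          have : m - 1 - k ≤ m := by omega
          nlinarith [hm, this]
      _ = (k + 1) * m ^ (k + 1) := by ring

/-- Elements of `ZMod 2` are 0 or 1. -/
lemma zmod2_cases (c : ZMod 2) : c = 0 ∨ c = 1 := by revert c; decide

theorem stmt_1 (n k : ℕ) (hk : 0 < k) (M : Finset (Fin n → ZMod 2))
    (h0 : (0 : Fin n → ZMod 2) ∈ M)
    (hbasis : ∃ B : Set (Fin n → ZMod 2), B ⊆ ↑M ∧
      LinearIndependent (ZMod 2) (fun v : B => (v : Fin n → ZMod 2)) ∧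
      Submodule.span (ZMod 2) B = ⊤)
    (hlow : 2 * k < M.card)
    (hhigh : (M.card : ℝ) ^ k < 2 ^ n * (Nat.factorial (k - 1))) :
    ∃ K ⊆ M, K.card = k + 1 ∧
      ∀ S ⊆ K, 2 ≤ S.card → (∑ v ∈ S, v) ∉ M := by
  classical
  set m := M.card with hmdef
  -- the counting bound
  have hcount : (∑ j ∈ Finset.range (k + 1), Nat.choose (m - 1) j) < 2 ^ n := by
    have h1 := sum_choose_le k hk m (by omega)
    have hfpos : (0 : ℝ) < (k - 1).factorial := by positivity
    have h1r : ((k - 1).factorial : ℝ) *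
        ((∑ j ∈ Finset.range (k + 1), Nat.choose (m - 1) j : ℕ) : ℝ) ≤ (m : ℝ) ^ k := by
      exact_mod_cast h1
    have h2 : ((k - 1).factorial : ℝ) *
        ((∑ j ∈ Finset.range (k + 1), Nat.choose (m - 1) j : ℕ) : ℝ)
        < 2 ^ n * (k - 1).factorial := lt_of_le_of_lt h1r hhigh
    have h3 : ((∑ j ∈ Finset.range (k + 1), Nat.choose (m - 1) j : ℕ) : ℝ) < 2 ^ n := by
      nlinarith
    exact_mod_cast h3
  -- the set of sums of at most k nonzero elements of M
  set A : Finset (Fin n → ZMod 2) := M.erase 0 with hA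
  have hAcard : A.card = m - 1 := Finset.card_erase_of_mem h0
  set SS : Finset (Fin n → ZMod 2) :=
    ((A.powerset).filter (fun T => T.card ≤ k)).image (fun T => ∑ v ∈ T, v) with hSS
  have hSScard : SS.card < 2 ^ n := by
    have hsub : (A.powerset).filter (fun T => T.card ≤ k)
        ⊆ (Finset.range (k + 1)).biUnion (fun j => A.powersetCard j) := by
      intro T hT
      simp only [Finset.mem_filter, Finset.mem_powerset] at hT
      simp only [Finset.mem_biUnion, Finset.mem_range, Finset.mem_powersetCard]
      exact ⟨T.card, by omega, hT.1, rfl⟩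
    calc SS.card ≤ ((A.powerset).filter (fun T => T.card ≤ k)).card := Finset.card_image_le
      _ ≤ ((Finset.range (k + 1)).biUnion (fun j => A.powersetCard j)).card :=
          Finset.card_le_card hsub
      _ ≤ ∑ j ∈ Finset.range (k + 1), (A.powersetCard j).card := Finset.card_biUnion_le
      _ = ∑ j ∈ Finset.range (k + 1), Nat.choose (m - 1) j := by
          simp [Finset.card_powersetCard, hAcard]
      _ < 2 ^ n := hcount
  -- find x not a short sum
  have hcardU : Fintype.card (Fin n → ZMod 2) = 2 ^ n := by simp
  obtain ⟨x, hx⟩ : ∃ x : Fin n → ZMod 2, x ∉ SS := by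
    by_contra h
    push_neg at h
    have : (Finset.univ : Finset (Fin n → ZMod 2)) ⊆ SS := fun y _ => h y
    have := Finset.card_le_card this
    rw [Finset.card_univ, hcardU] at this
    omega
  -- x is a sum of a subset of M
  obtain ⟨B, hBM, _, hBspan⟩ := hbasis
  have hxspan : x ∈ Submodule.span (ZMod 2) (↑M : Set (Fin n → ZMod 2)) := by
    have : Submodule.span (ZMod 2) B ≤ Submodule.span (ZMod 2) (↑M : Set _) :=
      Submodule.span_mono hBM
    exact this (hBspan ▸ Submodule.mem_top)
  obtain ⟨f, -, hf⟩ := Submodule.mem_span_finset.1 hxspan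
  have hrep0 : ∑ v ∈ M.filter (fun i => f i = 1), v = x := by
    rw [← hf,
      ← Finset.sum_filter_add_sum_filter_not M (fun i => f i = 1) (fun i => f i • i)]
    have h2 : ∑ v ∈ M.filter (fun i => ¬ f i = 1), f v • v = 0 := by
      apply Finset.sum_eq_zero
      intro v hv
      have := (Finset.mem_filter.1 hv).2
      rcases zmod2_cases (f v) with h | h
      · rw [h, zero_smul]
      · exact absurd h this
    rw [h2, add_zero]
    refine (Finset.sum_congr rfl ?_).symm
    intro v hv
    rw [(Finset.mem_filter.1 hv).2, one_smul]
  -- minimal representation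
  set 𝒯 : Finset (Finset (Fin n → ZMod 2)) :=
    M.powerset.filter (fun T => ∑ v ∈ T, v = x) with h𝒯
  have h𝒯ne : 𝒯.Nonempty := by
    refine ⟨M.filter (fun i => f i = 1), ?_⟩
    simp only [h𝒯, Finset.mem_filter, Finset.mem_powerset]
    exact ⟨Finset.filter_subset _ _, hrep0⟩
  obtain ⟨T, hT𝒯, hTmin⟩ := Finset.exists_min_image 𝒯 Finset.card h𝒯ne
  have hTM : T ⊆ M := Finset.mem_powerset.1 (Finset.mem_filter.1 hT𝒯).1
  have hTx : ∑ v ∈ T, v = x := (Finset.mem_filter.1 hT𝒯).2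
  -- T has at least k+1 elements
  have hTcard : k + 1 ≤ T.card := by
    by_contra h
    push_neg at h
    apply hx
    refine Finset.mem_image.2 ⟨T.erase 0, ?_, ?_⟩
    · simp only [Finset.mem_filter, Finset.mem_powerset]
      constructor
      · exact Finset.erase_subset_erase _ hTM
      · calc (T.erase 0).card ≤ T.card := Finset.card_le_card (Finset.erase_subset _ _)
          _ ≤ k := by omega
    · rw [Finset.sum_erase T (f := fun v => v) rfl]
      exact hTx
  obtain ⟨K, hKT, hKcard⟩ := Finset.exists_subset_card_eq hTcard
  refine ⟨K, hKT.trans hTM, hKcard, ?_⟩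
  intro S hSK hScard hwM
  set w : Fin n → ZMod 2 := ∑ v ∈ S, v with hw
  have hST : S ⊆ T := hSK.trans hKT
  have hsum : ∑ v ∈ T \ S, v + w = x := by rw [hw, Finset.sum_sdiff hST, hTx]
  have hScardT : S.card ≤ T.card := Finset.card_le_card hST
  have hTScard : (T \ S).card = T.card - S.card := Finset.card_sdiff_of_subset hST
  by_cases hwTS : w ∈ T \ S
  · -- replace: remove w from T \ S
    have hsum2 : ∑ v ∈ (T \ S).erase w, v = x := by
      have := Finset.sum_erase_add (T \ S) (fun v => v) hwTS
      have hcancel : w + w = 0 := by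
        ext i
        exact CharTwo.add_self_eq_zero (w i)
      calc ∑ v ∈ (T \ S).erase w, v
          = ∑ v ∈ (T \ S).erase w, v + (w + w) := by rw [hcancel, add_zero]
        _ = (∑ v ∈ (T \ S).erase w, v + w) + w := by rw [add_assoc]
        _ = ∑ v ∈ T \ S, v + w := by rw [this]
        _ = x := hsum
    have hmem : (T \ S).erase w ∈ 𝒯 := by
      simp only [h𝒯, Finset.mem_filter, Finset.mem_powerset]
      exact ⟨((Finset.erase_subset _ _).trans (Finset.sdiff_subset)).trans hTM, hsum2⟩
    have := hTmin _ hmem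
    have hcard2 : ((T \ S).erase w).card = (T \ S).card - 1 := Finset.card_erase_of_mem hwTS
    have hpos : 0 < (T \ S).card := Finset.card_pos.2 ⟨w, hwTS⟩
    omega
  · -- replace: insert w into T \ S
    have hsum2 : ∑ v ∈ insert w (T \ S), v = x := by
      rw [Finset.sum_insert hwTS, add_comm]
      exact hsum
    have hmem : insert w (T \ S) ∈ 𝒯 := by
      simp only [h𝒯, Finset.mem_filter, Finset.mem_powerset]
      refine ⟨?_, hsum2⟩
      intro y hy
      rcases Finset.mem_insert.1 hy with rfl | hy
      · exact hwM
      · exact hTM (Finset.sdiff_subset hy)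
    have := hTmin _ hmem
    have hcard2 : (insert w (T \ S)).card = (T \ S).card + 1 :=
      Finset.card_insert_of_notMem hwTS
    omega
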